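/- For N = 2, uMPS(D, d, 2) equals the set of symmetric d × d complex matrices of rank at most D², under the identification (ℂ^d)^{⊗2} ≅ ℂ^{d×d}. In particular, uMPS(D, d, 2) is a closed set. -/

import Mathlib

open Matrix BigOperators

/-- The coefficient tensor of the uniform matrix product state
`T_N(M_0,…,M_{d-1}) = Σ tr(M_{i_1} ⋯ M_{i_N}) e_{i_1} ⊗ ⋯ ⊗ e_{i_N}`,
identified with its coefficient function `(Fin N → Fin d) → ℂ`. -/
noncomputable def uT (D d N : ℕ) (M : Fin d → Matrix (Fin D) (Fin D) ℂ) :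
    (Fin N → Fin d) → ℂ :=
  fun v => Matrix.trace (List.ofFn fun k => M (v k)).prod

/-- The set of uniform matrix product states in `(ℂ^d)^{⊗N}`. -/
noncomputable def uMPS (D d N : ℕ) : Set ((Fin N → Fin d) → ℂ) :=
  Set.range (uT D d N)

section Aux


lemma symm_diag {d : ℕ} (S : Matrix (Fin d) (Fin d) ℂ) (hS : S.IsSymm) :
    ∃ (P : Matrix (Fin d) (Fin d) ℂ) (c : Fin d → ℂ),
      IsUnit P.det ∧ S = Pᵀ * Matrix.diagonal c * P := by
  classical
  set B := Matrix.toBilin' S with hBdef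
  have hB : B.IsSymm := by
    rw [LinearMap.BilinForm.isSymm_def]
    intro x y
    simp only [RingHom.id_apply, hBdef, Matrix.toBilin'_apply']
    rw [Matrix.dotProduct_mulVec, ← Matrix.vecMul_transpose, hS.eq, dotProduct_comm]
  obtain ⟨v, hv⟩ := LinearMap.BilinForm.exists_orthogonal_basis (LinearMap.BilinForm.isSymm_iff.mp hB)
  have hd : Module.finrank ℂ (Fin d → ℂ) = d := Module.finrank_fin_fun ℂ
  let v' : Module.Basis (Fin d) ℂ (Fin d → ℂ) := v.reindex (finCongr hd)
  have hv' : ∀ i j, i ≠ j → B (v' i) (v' j) = 0 := by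
    intro i j hij
    have : (finCongr hd).symm i ≠ (finCongr hd).symm j := fun h => hij (by
      simpa using congrArg (finCongr hd) h)
    simpa [v', Module.Basis.reindex_apply] using hv this
  let e : Module.Basis (Fin d) ℂ (Fin d → ℂ) := Pi.basisFun ℂ (Fin d)
  let P : Matrix (Fin d) (Fin d) ℂ := v'.toMatrix e
  have hPdet : IsUnit P.det := by
    haveI := v'.invertibleToMatrix e
    exact isUnit_det_of_invertible P
  refine ⟨P, fun k => B (v' k) (v' k), hPdet, ?_⟩
  ext i j
  have hei : (e i : Fin d → ℂ) = ∑ k, P k i • v' k := by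
    simpa [P, Module.Basis.toMatrix] using (v'.sum_repr (e i)).symm
  have hej : (e j : Fin d → ℂ) = ∑ k, P k j • v' k := by
    simpa [P, Module.Basis.toMatrix] using (v'.sum_repr (e j)).symm
  have hSij : S i j = B (e i) (e j) := by
    simp [hBdef, e, Matrix.toBilin'_apply',
      dotProduct, Pi.basisFun_apply, Pi.single_apply, Matrix.mulVec, Finset.sum_ite_eq]
  rw [hSij, hei, hej]
  rw [LinearMap.BilinForm.sum_left]
  calc (∑ k, B (P k i • v' k) (∑ l, P l j • v' l))
      = ∑ k, ∑ l, P k i * (P l j * B (v' k) (v' l)) := by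
        refine Finset.sum_congr rfl fun k _ => ?_
        rw [LinearMap.BilinForm.sum_right]
        simp only [LinearMap.BilinForm.smul_left, LinearMap.BilinForm.smul_right]
        exact Finset.sum_congr rfl fun l _ => by ring
    _ = ∑ k, ∑ l, if l = k then P k i * P k j * B (v' k) (v' k) else 0 := by
        refine Finset.sum_congr rfl fun k _ => Finset.sum_congr rfl fun l _ => ?_
        by_cases h : l = k
        · subst h; simp [mul_assoc]
        · simp [h, hv' _ _ (Ne.symm h)]
    _ = ∑ k, P k i * P k j * B (v' k) (v' k) := by simp
    _ = (Pᵀ * Matrix.diagonal (fun k => B (v' k) (v' k)) * P) i j := by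
        simp only [Matrix.mul_apply, Matrix.diagonal_apply, Matrix.transpose_apply,
          Finset.sum_mul, ite_mul, zero_mul, mul_ite, mul_zero]
        rw [Finset.sum_comm]
        simp [Finset.sum_ite_eq]
        refine Finset.sum_congr rfl fun l _ => by ring

lemma symm_factor {d r : ℕ} (S : Matrix (Fin d) (Fin d) ℂ) (hS : S.IsSymm) (hr : S.rank ≤ r) :
    ∃ G : Matrix (Fin d) (Fin r) ℂ, S = G * Gᵀ := by
  classical
  obtain ⟨P, c, hP, hfac⟩ := symm_diag S hS
  have hrankdiag : S.rank = (Matrix.diagonal c).rank := by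
    rw [hfac, Matrix.rank_mul_eq_left_of_isUnit_det P _ hP,
      Matrix.rank_mul_eq_right_of_isUnit_det Pᵀ _ (by simpa using hP)]
  have hcard : Fintype.card {k // c k ≠ 0} ≤ r := by
    have := Matrix.rank_diagonal c
    rw [hrankdiag, this] at hr
    exact hr
  obtain ⟨ι⟩ := Function.Embedding.nonempty_of_card_le (by simpa using hcard :
      Fintype.card {k // c k ≠ 0} ≤ Fintype.card (Fin r))
  have hsq : ∀ k : Fin d, ∃ t : ℂ, t ^ 2 = c k := fun k =>
    IsAlgClosed.exists_pow_nat_eq (c k) two_pos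
  choose s hs using hsq
  refine ⟨Matrix.of fun i m => ∑ k : {k // c k ≠ 0}, if ι k = m then s k.1 * P k.1 i else 0, ?_⟩
  ext i j
  rw [hfac]
  have lhs : (Pᵀ * Matrix.diagonal c * P) i j = ∑ k, c k * (P k i * P k j) := by
    simp only [Matrix.mul_apply, Matrix.diagonal_apply, Matrix.transpose_apply,
      Finset.sum_mul, ite_mul, zero_mul, mul_ite, mul_zero]
    rw [Finset.sum_comm]
    simp [Finset.sum_ite_eq]
    refine Finset.sum_congr rfl fun l _ => by ring
  rw [lhs]
  refine Eq.symm ?_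
  simp only [Matrix.mul_apply, Matrix.transpose_apply, Matrix.of_apply]
  calc ∑ m, (∑ k : {k // c k ≠ 0}, if ι k = m then s k.1 * P k.1 i else 0) *
        (∑ l : {k // c k ≠ 0}, if ι l = m then s l.1 * P l.1 j else 0)
      = ∑ m, ∑ k : {k // c k ≠ 0}, ∑ l : {k // c k ≠ 0},
          (if ι k = m then s k.1 * P k.1 i else 0) * (if ι l = m then s l.1 * P l.1 j else 0) := by
        exact Finset.sum_congr rfl fun m _ => Finset.sum_mul_sum _ _ _ _
    _ = ∑ k : {k // c k ≠ 0}, ∑ l : {k // c k ≠ 0}, ∑ m,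
          (if ι k = m then s k.1 * P k.1 i else 0) * (if ι l = m then s l.1 * P l.1 j else 0) := by
        rw [Finset.sum_comm]
        exact Finset.sum_congr rfl fun k _ => Finset.sum_comm
    _ = ∑ k : {k // c k ≠ 0}, ∑ l : {k // c k ≠ 0},
          if l = k then (s k.1 * P k.1 i) * (s l.1 * P l.1 j) else 0 := by
        refine Finset.sum_congr rfl fun k _ => Finset.sum_congr rfl fun l _ => ?_
        simp only [ite_mul, zero_mul, mul_ite, mul_zero]
        rw [Finset.sum_ite_eq Finset.univ (ι l)]
        by_cases h : l = k
        · subst h; simp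
        · have h1 : ¬ (ι k = ι l) := fun h' => h (ι.injective h').symm
          simp [h, h1]
    _ = ∑ k : {k // c k ≠ 0}, (s k.1 * P k.1 i) * (s k.1 * P k.1 j) := by simp
    _ = ∑ k : {k // c k ≠ 0}, c k.1 * (P k.1 i * P k.1 j) := by
        refine Finset.sum_congr rfl fun k _ => ?_
        rw [← hs k.1]; ring
    _ = ∑ k ∈ Finset.univ.filter (fun k => c k ≠ 0), c k * (P k i * P k j) := by
        exact (Finset.sum_subtype (Finset.univ.filter (fun k => c k ≠ 0)) (fun x => by simp) (fun k => c k * (P k i * P k j))).symm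
    _ = ∑ k, c k * (P k i * P k j) := by
        exact Finset.sum_filter_of_ne fun k _ h hc => h (by simp [hc])

lemma trace_realize {D d : ℕ} (G : Matrix (Fin d) (Fin (D^2)) ℂ) :
    ∃ M : Fin d → Matrix (Fin D) (Fin D) ℂ,
      ∀ i j, Matrix.trace (M i * M j) = (G * Gᵀ) i j := by
  classical
  obtain ⟨α, hα⟩ : ∃ α : ℂ, α ^ 2 = (2 * Complex.I)⁻¹ :=
    IsAlgClosed.exists_pow_nat_eq _ two_pos
  let e : Fin (D^2) ≃ Fin D × Fin D := (finCongr (pow_two D)).trans finProdFinEquiv.symm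
  let sE : Fin (D^2) ≃ Fin (D^2) := e.trans ((Equiv.prodComm _ _).trans e.symm)
  have hss : ∀ k, sE (sE k) = k := by
    intro k
    show e.symm ((Equiv.prodComm _ _) (e (e.symm ((Equiv.prodComm _ _) (e k))))) = k
    rw [Equiv.apply_symm_apply]
    simp
  let X : (Fin (D^2) → ℂ) → Matrix (Fin D) (Fin D) ℂ :=
    fun u => Matrix.of fun a b => u (e.symm (a, b))
  have hT : ∀ u v : Fin (D^2) → ℂ,
      Matrix.trace (X u * X v) = ∑ k, u k * v (sE k) := by
    intro u v
    calc Matrix.trace (X u * X v)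
        = ∑ a, ∑ b, u (e.symm (a,b)) * v (e.symm (b,a)) := by
          simp [Matrix.trace, Matrix.diag, Matrix.mul_apply, X]
      _ = ∑ p : Fin D × Fin D, u (e.symm p) * v (e.symm p.swap) := by
          rw [Fintype.sum_prod_type]
          simp only [Prod.swap_prod_mk]
      _ = ∑ k, u k * v (sE k) := by
          refine (Fintype.sum_equiv e (fun k => u k * v (sE k))
            (fun p => u (e.symm p) * v (e.symm p.swap)) ?_).symm
          intro k
          simp [sE]
  have hre : ∀ f g : Fin (D^2) → ℂ, ∑ k, f (sE k) * g k = ∑ k, f k * g (sE k) := by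
    intro f g
    refine Fintype.sum_equiv sE _ _ ?_
    intro k
    rw [hss]
  refine ⟨fun i => X (fun k => α * (G i k + Complex.I * G i (sE k))), fun i j => ?_⟩
  rw [hT (fun k => α * (G i k + Complex.I * G i (sE k)))
    (fun k => α * (G j k + Complex.I * G j (sE k)))]
  have expand : ∀ k, (α * (G i k + Complex.I * G i (sE k))) *
      (α * (G j (sE k) + Complex.I * G j (sE (sE k)))) =
      α^2 * (G i k * G j (sE k) + Complex.I * (G i k * G j k)
        + Complex.I * (G i (sE k) * G j (sE k)) + (Complex.I * Complex.I) * (G i (sE k) * G j k)) := by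
    intro k
    rw [hss]
    ring
  rw [Finset.sum_congr rfl fun k _ => expand k]
  have h1 : ∑ k, G i (sE k) * G j (sE k) = ∑ k, G i k * G j k := by
    exact Fintype.sum_equiv sE _ _ fun k => rfl
  have h2 : ∑ k, G i (sE k) * G j k = ∑ k, G i k * G j (sE k) := hre _ _
  rw [← Finset.mul_sum]
  rw [Finset.sum_add_distrib, Finset.sum_add_distrib, Finset.sum_add_distrib,
    ← Finset.mul_sum, ← Finset.mul_sum, ← Finset.mul_sum, h1, h2, Complex.I_mul_I]
  have : (G * Gᵀ) i j = ∑ k, G i k * G j k := by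
    simp [Matrix.mul_apply]
  rw [this, hα]
  have hI : (2 * Complex.I) ≠ 0 := by
    simp [Complex.I_ne_zero]
  field_simp
  ring


lemma rank_rowselect_le {k n p : ℕ} (B : Matrix (Fin k) (Fin n) ℂ) (u : Fin p → Fin k) :
    (B.submatrix u id).rank ≤ B.rank := by
  rw [Matrix.rank_eq_finrank_span_row, Matrix.rank_eq_finrank_span_row]
  apply Submodule.finrank_mono
  apply Submodule.span_mono
  rintro x ⟨i, rfl⟩
  exact ⟨u i, rfl⟩

lemma rank_submatrix_le'' {m n m' n' : ℕ} (A : Matrix (Fin m) (Fin n) ℂ)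
    (f : Fin m' → Fin m) (g : Fin n' → Fin n) :
    (A.submatrix f g).rank ≤ A.rank := by
  have h1 : (A.submatrix f id).rank ≤ A.rank := rank_rowselect_le A f
  have h2 : (A.submatrix f g).rank ≤ (A.submatrix f id).rank := by
    have heq : A.submatrix f g = ((A.submatrix f id)ᵀ.submatrix g id)ᵀ := by
      ext i j; rfl
    rw [heq, Matrix.rank_transpose]
    calc ((A.submatrix f id)ᵀ.submatrix g id).rank ≤ (A.submatrix f id)ᵀ.rank :=
          rank_rowselect_le _ g
      _ = (A.submatrix f id).rank := Matrix.rank_transpose _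
  exact h2.trans h1

lemma exists_rowselect {m n r : ℕ} (A : Matrix (Fin m) (Fin n) ℂ) (h : r ≤ A.rank) :
    ∃ f : Fin r → Fin m, (A.submatrix f id).rank = r := by
  classical
  obtain ⟨b, hb_sub, hb_span, hb_li⟩ := exists_linearIndependent ℂ (Set.range A)
  have hbfin : b.Finite := hb_li.finite
  haveI := hbfin.fintype
  have hcard : r ≤ Fintype.card b := by
    have h1 : A.rank = Module.finrank ℂ (Submodule.span ℂ b) := by
      rw [Matrix.rank_eq_finrank_span_row, hb_span]
      rfl
    have h2 : Module.finrank ℂ (Submodule.span ℂ b) = Fintype.card b := by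
      rw [finrank_span_set_eq_card hb_li, Set.toFinset_card]
    exact h.trans_eq (h1.trans h2)
  obtain ⟨emb⟩ := Function.Embedding.nonempty_of_card_le
    (by simpa using hcard : Fintype.card (Fin r) ≤ Fintype.card b)
  have hpre : ∀ x : b, ∃ i, A i = (x : Fin n → ℂ) := fun x => hb_sub x.2
  choose idx hidx using hpre
  refine ⟨fun p => idx (emb p), ?_⟩
  have hli : LinearIndependent ℂ (A.submatrix (fun p => idx (emb p)) id) := by
    have : (A.submatrix (fun p => idx (emb p)) id) = fun p => ((emb p : b) : Fin n → ℂ) := by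
      funext p
      have := hidx (emb p)
      ext j
      simp [Matrix.submatrix_apply, this]
    rw [this]
    exact hb_li.comp emb emb.injective
  have := hli.rank_matrix
  exact (LinearIndependent.rank_matrix (M := A.submatrix (fun p => idx (emb p)) id) hli).trans (Fintype.card_fin r)

lemma isUnit_of_rank_eq {r : ℕ} (C : Matrix (Fin r) (Fin r) ℂ) (h : C.rank = r) :
    IsUnit C.det := by
  rw [← Matrix.isUnit_iff_isUnit_det, ← Matrix.mulVec_surjective_iff_isUnit]
  have hrange : LinearMap.range C.mulVecLin = ⊤ := by
    apply Submodule.eq_top_of_finrank_eq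
    rw [show Module.finrank ℂ (LinearMap.range C.mulVecLin) = C.rank from rfl, h,
      Module.finrank_fin_fun]
  intro y
  have : y ∈ LinearMap.range C.mulVecLin := hrange ▸ Submodule.mem_top
  obtain ⟨x, hx⟩ := this
  exact ⟨x, hx⟩

lemma exists_sq_submatrix {d r : ℕ} (A : Matrix (Fin d) (Fin d) ℂ) (h : r ≤ A.rank) :
    ∃ (f g : Fin r → Fin d), IsUnit ((A.submatrix f g).det) := by
  obtain ⟨f, hf⟩ := exists_rowselect A h
  obtain ⟨g, hg⟩ := exists_rowselect (A.submatrix f id)ᵀ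
    (by rw [Matrix.rank_transpose, hf])
  refine ⟨f, g, ?_⟩
  apply isUnit_of_rank_eq
  have heq : (A.submatrix f g)ᵀ = ((A.submatrix f id)ᵀ.submatrix g id) := by
    ext i j; rfl
  rw [← Matrix.rank_transpose, heq, hg]

lemma isClosed_rank_le (d r : ℕ) :
    IsClosed {A : Matrix (Fin d) (Fin d) ℂ | A.rank ≤ r} := by
  rw [← isOpen_compl_iff]
  rw [isOpen_iff_forall_mem_open]
  intro A hA
  simp only [Set.mem_compl_iff, Set.mem_setOf_eq, not_le] at hA
  obtain ⟨f, g, hdet⟩ := exists_sq_submatrix A (show r + 1 ≤ A.rank from hA)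
  refine ⟨{B : Matrix (Fin d) (Fin d) ℂ | (B.submatrix f g).det ≠ 0}, ?_, ?_, ?_⟩
  · intro B hB
    simp only [Set.mem_setOf_eq] at hB
    simp only [Set.mem_compl_iff, Set.mem_setOf_eq, not_le]
    have hU : IsUnit (B.submatrix f g) :=
      (Matrix.isUnit_iff_isUnit_det _).mpr (isUnit_iff_ne_zero.mpr hB)
    have : (B.submatrix f g).rank = r + 1 := by
      rw [Matrix.rank_of_isUnit _ hU, Fintype.card_fin]
    have hle := rank_submatrix_le'' B f g
    omega
  · have hcont : Continuous fun B : Matrix (Fin d) (Fin d) ℂ => (B.submatrix f g).det :=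
      (continuous_id.matrix_submatrix f g).matrix_det
    exact isOpen_compl_singleton.preimage hcont
  · simpa using isUnit_iff_ne_zero.mp hdet

lemma uT_two_apply {D d : ℕ} (M : Fin d → Matrix (Fin D) (Fin D) ℂ) (v : Fin 2 → Fin d) :
    uT D d 2 M v = Matrix.trace (M (v 0) * M (v 1)) := by
  simp [uT, List.ofFn_succ]

end Aux

/-- `uMPS(D,d,2)` consists exactly of the symmetric `d × d` matrices of rank at most `D²`
(under the identification `(ℂ^d)^{⊗2} ≅ ℂ^{d×d}`), and in particular it is closed. -/
theorem stmt_9 (D d : ℕ) :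
    uMPS D d 2 = {T | (Matrix.of fun i j => T ![i, j]).IsSymm ∧
        (Matrix.of fun i j => T ![i, j]).rank ≤ D ^ 2} ∧
    IsClosed (uMPS D d 2) := by
  classical
  have hset : uMPS D d 2 = {T | (Matrix.of fun i j => T ![i, j]).IsSymm ∧
      (Matrix.of fun i j => T ![i, j]).rank ≤ D ^ 2} := by
    ext T
    constructor
    · rintro ⟨M, rfl⟩
      have hM : (Matrix.of fun i j => uT D d 2 M ![i, j]) =
          Matrix.of fun i j => Matrix.trace (M i * M j) := by
        ext i j
        rw [Matrix.of_apply, uT_two_apply]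
        simp
      constructor
      · rw [hM]
        ext i j
        simp [Matrix.trace_mul_comm (M j) (M i)]
      · rw [hM]
        have h : (Matrix.of fun i j => Matrix.trace (M i * M j)) =
            (Matrix.of fun (i : Fin d) (p : Fin D × Fin D) => M i p.1 p.2) *
            (Matrix.of fun (p : Fin D × Fin D) (j : Fin d) => M j p.2 p.1) := by
          ext i j
          simp [Matrix.mul_apply, Matrix.trace, Matrix.diag, Fintype.sum_prod_type]
        rw [h]
        calc ((Matrix.of fun (i : Fin d) (p : Fin D × Fin D) => M i p.1 p.2) *
            (Matrix.of fun (p : Fin D × Fin D) (j : Fin d) => M j p.2 p.1)).rank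
            ≤ _ := Matrix.rank_mul_le_right _ _
          _ ≤ Fintype.card (Fin D × Fin D) := Matrix.rank_le_card_height _
          _ = D ^ 2 := by simp [pow_two]
    · rintro ⟨hsymm, hrank⟩
      obtain ⟨G, hG⟩ := symm_factor (Matrix.of fun i j => T ![i, j]) hsymm hrank
      obtain ⟨M, hMG⟩ := trace_realize G
      refine ⟨M, ?_⟩
      funext v
      have hv : ![v 0, v 1] = v := by
        funext k
        fin_cases k <;> rfl
      rw [uT_two_apply, hMG, ← hG, Matrix.of_apply, hv]
  refine ⟨hset, ?_⟩
  rw [hset]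
  have hΦ : Continuous (fun T : (Fin 2 → Fin d) → ℂ =>
      (Matrix.of fun i j => T ![i, j] : Matrix (Fin d) (Fin d) ℂ)) :=
    continuous_matrix fun i j => continuous_apply _
  have h1 : IsClosed {T : (Fin 2 → Fin d) → ℂ |
      (Matrix.of fun i j => T ![i, j]).IsSymm} := by
    have : IsClosed {A : Matrix (Fin d) (Fin d) ℂ | A.IsSymm} :=
      isClosed_eq continuous_id.matrix_transpose continuous_id
    exact this.preimage hΦ
  have h2 : IsClosed {T : (Fin 2 → Fin d) → ℂ |
      (Matrix.of fun i j => T ![i, j]).rank ≤ D ^ 2} :=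
    (isClosed_rank_le d (D ^ 2)).preimage hΦ
  exact h1.inter h2
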